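/- Let Φ be a root system of type B₂ with short root α and long root β generating it, and let (c_{γ,δ,i,j}) be structure constants (in a commutative ring where 2 is invertible) satisfying the Chevalley commutator formula [u_γ(λ), u_δ(μ)] = ∏ u_{iγ+jδ}(c_{γ,δ,i,j} λ^i μ^j). Then c_{β,α,2} = -c_{α,β,2} and c_{α,β,2} = (1/2)·c_{α,β}·c_{α,α+β}. -/

import Mathlib

open scoped commutatorElement

/-- Structure constants in type `B₂`: `α` short, `β` long, with root subgroups
parameterized by homomorphisms `uα, uβ, uab (= u_{α+β}), u2ab (= u_{2α+β})`
from `(R,+)` to a group `G`, satisfying the Chevalley commutator formulas with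
constants `c_{α,β}, c_{α,β,2}, c_{β,α}, c_{β,α,2}, c_{α,α+β}`. Then
`c_{β,α,2} = -c_{α,β,2}` and `c_{α,β,2} = (1/2)·c_{α,β}·c_{α,α+β}`
(i.e. `2·c_{α,β,2} = c_{α,β}·c_{α,α+β}`, `2` being invertible in `R`). -/
theorem stmt17 {R : Type*} [CommRing R] {G : Type*} [Group G]
    (h2 : IsUnit (2 : R))
    (uα uβ uab u2ab : R → G)
    (hαhom : ∀ x y, uα (x + y) = uα x * uα y)
    (hβhom : ∀ x y, uβ (x + y) = uβ x * uβ y)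
    (habhom : ∀ x y, uab (x + y) = uab x * uab y)
    (h2abhom : ∀ x y, u2ab (x + y) = u2ab x * u2ab y)
    (hcomm1 : ∀ x y, uab x * u2ab y = u2ab y * uab x)
    (hcomm2 : ∀ x y, uα x * u2ab y = u2ab y * uα x)
    (htriv : ∀ x y, uab x * u2ab y = 1 → x = 0 ∧ y = 0)
    (cαβ cαβ2 cβα cβα2 cααβ : R)
    (hαβ : ∀ l m : R, ⁅uα l, uβ m⁆ = uab (cαβ * l * m) * u2ab (cαβ2 * l ^ 2 * m))
    (hβα : ∀ l m : R, ⁅uβ l, uα m⁆ = uab (cβα * l * m) * u2ab (cβα2 * l * m ^ 2))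
    (hααβ : ∀ l m : R, ⁅uα l, uab m⁆ = u2ab (cααβ * l * m)) :
    cβα2 = -cαβ2 ∧ 2 * cαβ2 = cαβ * cααβ := by
  -- basic facts about the homomorphisms
  have hab0 : uab 0 = 1 := by
    have h := habhom 0 0
    rw [add_zero] at h
    exact (left_eq_mul.mp h)
  have h2ab0 : u2ab 0 = 1 := by
    have h := h2abhom 0 0
    rw [add_zero] at h
    exact (left_eq_mul.mp h)
  have habinv : ∀ x, uab (-x) = (uab x)⁻¹ := by
    intro x
    refine eq_inv_of_mul_eq_one_left ?_
    rw [← habhom, neg_add_cancel, hab0]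
  have h2abinv : ∀ x, u2ab (-x) = (u2ab x)⁻¹ := by
    intro x
    refine eq_inv_of_mul_eq_one_left ?_
    rw [← h2abhom, neg_add_cancel, h2ab0]
  -- injectivity of (x,y) ↦ uab x * u2ab y
  have inj : ∀ p q r s : R, uab p * u2ab q = uab r * u2ab s → p = r ∧ q = s := by
    intro p q r s h
    have key : uab (p + -r) * u2ab (q + -s) = 1 := by
      have e : uab (p + -r) * u2ab (q + -s)
          = uab (-r) * (uab p * u2ab q) * u2ab (-s) := by
        rw [add_comm p, habhom, h2abhom]
        rw [mul_assoc, mul_assoc, mul_assoc, ← mul_assoc (uab p),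
          hcomm1 p q, mul_assoc]
      rw [e, h, habinv, h2abinv]
      group
    obtain ⟨h1, h2'⟩ := htriv _ _ key
    exact ⟨by linear_combination h1, by linear_combination h2'⟩
  have cαu : ∀ x y : R, Commute (uα x) (u2ab y) := fun x y => hcomm2 x y
  -- specialization of the commutator formula
  have hC : ⁅uα (1:R), uβ 1⁆ = uab cαβ * u2ab cαβ2 := by
    have := hαβ 1 1
    simpa using this
  -- Part 1 : cβα2 = -cαβ2
  have part1 : cβα = -cαβ ∧ cβα2 = -cαβ2 := by
    have hBA : ⁅uβ (1:R), uα 1⁆ = uab cβα * u2ab cβα2 := by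
      have := hβα 1 1
      simpa using this
    have hBA' : ⁅uβ (1:R), uα 1⁆ = uab (-cαβ) * u2ab (-cαβ2) := by
      rw [← commutatorElement_inv, hC, mul_inv_rev, ← habinv, ← h2abinv, hcomm1]
    exact inj _ _ _ _ (hBA.symm.trans hBA')
  -- Part 2 : 2 * cαβ2 = cαβ * cααβ
  -- conjugation of uab cαβ by uα 1
  have conj : uα 1 * uab cαβ * (uα 1)⁻¹ = u2ab (cααβ * cαβ) * uab cαβ := by
    have h := hααβ 1 cαβ
    rw [commutatorElement_def] at h
    rw [mul_inv_eq_iff_eq_mul] at h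
    rw [h, mul_one]
  have hc : u2ab cαβ2 * (uα 1)⁻¹ = (uα 1)⁻¹ * u2ab cαβ2 :=
    ((cαu 1 cαβ2).inv_left.eq).symm
  have hA : uα 1 * (uab cαβ * u2ab cαβ2) * (uα 1)⁻¹
      = (uα 1 * uab cαβ * (uα 1)⁻¹) * u2ab cαβ2 := by
    calc uα 1 * (uab cαβ * u2ab cαβ2) * (uα 1)⁻¹
        = uα 1 * uab cαβ * (u2ab cαβ2 * (uα 1)⁻¹) := by group
      _ = uα 1 * uab cαβ * ((uα 1)⁻¹ * u2ab cαβ2) := by rw [hc]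
      _ = (uα 1 * uab cαβ * (uα 1)⁻¹) * u2ab cαβ2 := by group
  have e2 : ⁅uα ((1:R) + 1), uβ 1⁆
      = uab (cαβ + cαβ) * u2ab (cααβ * cαβ + (cαβ2 + cαβ2)) := by
    have split : ⁅uα ((1:R) + 1), uβ 1⁆
        = uα 1 * ⁅uα (1:R), uβ 1⁆ * (uα 1)⁻¹ * ⁅uα (1:R), uβ 1⁆ := by
      rw [hαhom, commutatorElement_def, commutatorElement_def]
      group
    rw [split, hC]
    calc uα 1 * (uab cαβ * u2ab cαβ2) * (uα 1)⁻¹ * (uab cαβ * u2ab cαβ2)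
        = (uα 1 * (uab cαβ * u2ab cαβ2) * (uα 1)⁻¹) * (uab cαβ * u2ab cαβ2) := by
          group
      _ = ((uα 1 * uab cαβ * (uα 1)⁻¹) * u2ab cαβ2) * (uab cαβ * u2ab cαβ2) := by
          rw [hA]
      _ = ((u2ab (cααβ * cαβ) * uab cαβ) * u2ab cαβ2) * (uab cαβ * u2ab cαβ2) := by
          rw [conj]
      _ = u2ab (cααβ * cαβ) * (uab cαβ * (u2ab cαβ2 * uab cαβ) * u2ab cαβ2) := by
          group
      _ = u2ab (cααβ * cαβ) * (uab cαβ * (uab cαβ * u2ab cαβ2) * u2ab cαβ2) := by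
          rw [← hcomm1]
      _ = u2ab (cααβ * cαβ) * (uab cαβ * uab cαβ) * (u2ab cαβ2 * u2ab cαβ2) := by
          group
      _ = u2ab (cααβ * cαβ) * uab (cαβ + cαβ) * u2ab (cαβ2 + cαβ2) := by
          rw [habhom, h2abhom]
      _ = uab (cαβ + cαβ) * u2ab (cααβ * cαβ) * u2ab (cαβ2 + cαβ2) := by
          rw [← hcomm1]
      _ = uab (cαβ + cαβ) * u2ab (cααβ * cαβ + (cαβ2 + cαβ2)) := by
          rw [mul_assoc, ← h2abhom]
  have e1 : ⁅uα ((1:R) + 1), uβ 1⁆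
      = uab (cαβ * (1 + 1) * 1) * u2ab (cαβ2 * (1 + 1) ^ 2 * 1) := hαβ _ _
  obtain ⟨ha, hb⟩ := inj _ _ _ _ (e1.symm.trans e2)
  exact ⟨part1.2, by linear_combination hb⟩
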